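/- Let (C,D) be an out-j collapsible pair with D non-empty. Then the number of outwardly matched j-faces of D is independent of the chosen out-j collapsing sequence and equals (−1)^j·(χ(D) − 1), where χ is the Euler characteristic. -/

import Mathlib

/-- An (abstract, finite) simplicial complex. -/
def IsComplex {V : Type*} [DecidableEq V] (C : Finset (Finset V)) : Prop :=
  ∀ σ ∈ C, σ.Nonempty ∧ ∀ τ ⊆ σ, τ.Nonempty → τ ∈ C

/-- `IsCollapseSeq C L C'` : the list `L` of matching pairs `(σ, τ)` records a valid sequence of
elementary collapses transforming `C` into `C'` (each step removes a free face `σ` together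
with the unique face `τ` strictly containing it). -/
def IsCollapseSeq {V : Type*} [DecidableEq V] :
    Finset (Finset V) → List (Finset V × Finset V) → Finset (Finset V) → Prop
  | C, [], C' => C = C'
  | C, p :: L, C' =>
      p.1 ∈ C ∧ p.2 ∈ C ∧ p.1 ⊂ p.2 ∧ p.1.Nonempty ∧
        (∀ ρ ∈ C, p.1 ⊂ ρ → ρ = p.2) ∧ IsCollapseSeq (C \ {p.1, p.2}) L C'

/-- The (non-reduced) Euler characteristic `χ(D) = Σ_{σ ∈ D} (−1)^{dim σ}` of a complex. -/
def eulerChar {V : Type*} [DecidableEq V] (D : Finset (Finset V)) : ℤ :=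
  ∑ σ ∈ D, (-1 : ℤ) ^ (σ.card - 1)

lemma collapse_subset {V : Type*} [DecidableEq V] :
    ∀ (L : List (Finset V × Finset V)) (C C' : Finset (Finset V)),
      IsCollapseSeq C L C' → C' ⊆ C := by
  intro L
  induction L with
  | nil => intro C C' h; exact h ▸ le_refl _
  | cons p L ih =>
    intro C C' h
    exact (ih _ _ h.2.2.2.2.2).trans Finset.sdiff_subset

lemma collapse_mem {V : Type*} [DecidableEq V] :
    ∀ (L : List (Finset V × Finset V)) (C C' : Finset (Finset V)),
      IsCollapseSeq C L C' → ∀ q ∈ L, q.1 ∈ C ∧ q.2 ∈ C := by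
  intro L
  induction L with
  | nil => intro C C' _ q hq; simp at hq
  | cons p L ih =>
    intro C C' h q hq
    rcases List.mem_cons.1 hq with rfl | hq
    · exact ⟨h.1, h.2.1⟩
    · have := ih _ _ h.2.2.2.2.2 q hq
      exact ⟨Finset.sdiff_subset this.1, Finset.sdiff_subset this.2⟩

lemma sdiff_pair_complex {V : Type*} [DecidableEq V]
    {S C : Finset (Finset V)} {a b : Finset V}
    (hS : IsComplex S) (hSC : S ⊆ C)
    (hfree : ∀ ρ ∈ C, a ⊂ ρ → ρ = b) (hab : a ⊂ b) :
    IsComplex (S \ {a, b}) := by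
  intro σ hσ
  have hσS := Finset.mem_sdiff.1 hσ
  refine ⟨(hS σ hσS.1).1, fun τ hτσ hτne => ?_⟩
  have hτS : τ ∈ S := (hS σ hσS.1).2 τ hτσ hτne
  rw [Finset.mem_sdiff]
  refine ⟨hτS, fun hmem => ?_⟩
  rcases eq_or_ne τ σ with rfl | hne'
  · exact hσS.2 hmem
  have hτσ' : τ ⊂ σ := Finset.ssubset_iff_subset_ne.2 ⟨hτσ, hne'⟩
  rcases Finset.mem_insert.1 hmem with rfl | hmem
  · exact hσS.2 (by simp [hfree σ (hSC hσS.1) hτσ'])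
  · rw [Finset.mem_singleton] at hmem
    subst hmem
    have : a ⊂ σ := hab.trans hτσ'
    exact hσS.2 (by simp [hfree σ (hSC hσS.1) this])

lemma aux_count {V : Type*} [DecidableEq V] (j : ℕ) (w : V) :
    ∀ (L : List (Finset V × Finset V)) (C D : Finset (Finset V)),
      IsComplex C → IsComplex D → D ⊆ C → ({w} : Finset V) ∈ D →
      IsCollapseSeq C L {({w} : Finset V)} →
      (∀ p ∈ L, p.1 ∈ D → p.2 ∉ D → p.1.card = j + 1) →
      ((L.countP fun p => decide (p.1 ∈ D ∧ p.2 ∉ D)) : ℤ) = (-1) ^ j * (eulerChar D - 1) := by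
  intro L
  induction L with
  | nil =>
    intro C D hC hD hDC hw hseq _
    have hCeq : C = {({w} : Finset V)} := hseq
    have hDeq : D = {({w} : Finset V)} :=
      Finset.Subset.antisymm (hCeq ▸ hDC) (Finset.singleton_subset_iff.2 hw)
    subst hDeq
    simp [eulerChar]
  | cons p L ih =>
    intro C D hC hD hDC hw hseq houtj
    obtain ⟨h1, h2, hss, hne, hfree, hseq'⟩ := hseq
    -- the matched pair has consecutive dimensions
    obtain ⟨x, hxτ, hxσ⟩ := Finset.exists_of_ssubset hss
    have hins : insert x p.1 ∈ C :=
      (hC p.2 h2).2 (insert x p.1) (Finset.insert_subset hxτ hss.subset)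
        (Finset.insert_nonempty _ _)
    have hinseq : insert x p.1 = p.2 := hfree _ hins (Finset.ssubset_insert hxσ)
    have hcard : p.2.card = p.1.card + 1 := by
      rw [← hinseq, Finset.card_insert_of_notMem hxσ]
    -- {w} survives the collapse step
    have hwC' : ({w} : Finset V) ∈ C \ {p.1, p.2} :=
      collapse_subset L _ _ hseq' (Finset.mem_singleton_self _)
    have hwnot : ({w} : Finset V) ∉ ({p.1, p.2} : Finset (Finset V)) :=
      (Finset.mem_sdiff.1 hwC').2
    set D' := D \ {p.1, p.2} with hD'def
    have hD'complex : IsComplex D' := sdiff_pair_complex hD hDC hfree hss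
    have hC'complex : IsComplex (C \ {p.1, p.2}) :=
      sdiff_pair_complex hC (le_refl _) hfree hss
    have hD'C' : D' ⊆ C \ {p.1, p.2} := Finset.sdiff_subset_sdiff hDC (le_refl _)
    have hwD' : ({w} : Finset V) ∈ D' := Finset.mem_sdiff.2 ⟨hw, hwnot⟩
    have hmemL : ∀ q ∈ L, q.1 ∉ ({p.1, p.2} : Finset (Finset V)) ∧
        q.2 ∉ ({p.1, p.2} : Finset (Finset V)) := by
      intro q hq
      have := collapse_mem L _ _ hseq' q hq
      exact ⟨(Finset.mem_sdiff.1 this.1).2, (Finset.mem_sdiff.1 this.2).2⟩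
    have hDiff : ∀ q ∈ L, (q.1 ∈ D' ↔ q.1 ∈ D) ∧ (q.2 ∈ D' ↔ q.2 ∈ D) := by
      intro q hq
      obtain ⟨hq1, hq2⟩ := hmemL q hq
      constructor
      · rw [hD'def, Finset.mem_sdiff]; tauto
      · rw [hD'def, Finset.mem_sdiff]; tauto
    have houtj' : ∀ q ∈ L, q.1 ∈ D' → q.2 ∉ D' → q.1.card = j + 1 := by
      intro q hq hq1 hq2
      exact houtj q (List.mem_cons.2 (Or.inr hq))
        ((hDiff q hq).1.1 hq1) (fun h => hq2 ((hDiff q hq).2.2 h))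
    have hIH := ih (C \ {p.1, p.2}) D' hC'complex hD'complex hD'C' hwD' hseq' houtj'
    have hcount : (L.countP fun q => decide (q.1 ∈ D' ∧ q.2 ∉ D'))
        = (L.countP fun q => decide (q.1 ∈ D ∧ q.2 ∉ D)) := by
      apply List.countP_congr
      intro q hq
      obtain ⟨e1, e2⟩ := hDiff q hq
      simp only [decide_eq_true_eq]
      constructor
      · rintro ⟨a, b⟩; exact ⟨e1.1 a, fun h => b (e2.2 h)⟩
      · rintro ⟨a, b⟩; exact ⟨e1.2 a, fun h => b (e2.1 h)⟩
    rw [hcount] at hIH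
    have hconsec : (-1 : ℤ) ^ (p.2.card - 1) = -(-1 : ℤ) ^ (p.1.card - 1) := by
      rw [hcard]
      obtain ⟨n, hn⟩ : ∃ n, p.1.card = n + 1 :=
        ⟨p.1.card - 1, (Nat.succ_pred_eq_of_pos (Finset.card_pos.2 hne)).symm⟩
      rw [hn]
      simp [pow_succ]
    rw [List.countP_cons]
    by_cases h1D : p.1 ∈ D
    · by_cases h2D : p.2 ∈ D
      · -- both matched faces in D : euler char unchanged
        have hpair : ({p.1, p.2} : Finset (Finset V)) ⊆ D := by
          intro y hy; rcases Finset.mem_insert.1 hy with rfl | hy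
          · exact h1D
          · rw [Finset.mem_singleton] at hy; subst hy; exact h2D
        have heuler : eulerChar D' = eulerChar D := by
          rw [hD'def, eulerChar, Finset.sum_sdiff_eq_sub hpair,
            Finset.sum_pair hss.ne, hconsec, eulerChar]
          ring
        rw [heuler] at hIH
        simp only [h1D, h2D, decide_eq_true_eq, not_true, and_false, decide_false,
          cond_false, Nat.add_zero]
        simpa using hIH
      · -- outwardly matched face : card p.1 = j + 1
        have hj : p.1.card = j + 1 := houtj p List.mem_cons_self h1D h2D
        have hpair : ({p.1, p.2} : Finset (Finset V)) ∩ D = {p.1} := by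
          ext y
          simp only [Finset.mem_inter, Finset.mem_insert, Finset.mem_singleton]
          constructor
          · rintro ⟨rfl | rfl, hyD⟩
            · rfl
            · exact absurd hyD h2D
          · rintro rfl; exact ⟨Or.inl rfl, h1D⟩
        have heq : D' = D \ {p.1} := by
          rw [hD'def]
          ext y
          simp only [Finset.mem_sdiff, Finset.mem_insert, Finset.mem_singleton]
          constructor
          · rintro ⟨hyD, hy⟩; exact ⟨hyD, fun h => hy (Or.inl h)⟩
          · rintro ⟨hyD, hy⟩
            exact ⟨hyD, fun h => by rcases h with rfl | rfl; exact hy rfl; exact h2D hyD⟩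
        have heuler : eulerChar D' = eulerChar D - (-1) ^ j := by
          rw [heq, eulerChar, Finset.sum_sdiff_eq_sub (Finset.singleton_subset_iff.2 h1D),
            Finset.sum_singleton, hj]
          simp [eulerChar]
        rw [heuler] at hIH
        have h11 : ((-1 : ℤ) ^ j) * ((-1 : ℤ) ^ j) = 1 := by
          rw [← pow_add]
          exact Even.neg_one_pow ⟨j, rfl⟩
        simp only [h1D, h2D, not_false_iff, and_true, decide_true, cond_true, ↓reduceIte]
        push_cast
        linear_combination hIH - h11
    · -- p.1 not in D, hence p.2 not in D either, euler char unchanged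
      have h2D : p.2 ∉ D := fun h2D =>
        h1D ((hD p.2 h2D).2 p.1 hss.subset hne)
      have heuler : eulerChar D' = eulerChar D := by
        rw [hD'def]
        congr 1
        ext y
        simp only [Finset.mem_sdiff, Finset.mem_insert, Finset.mem_singleton]
        constructor
        · exact fun h => h.1
        · intro hy
          exact ⟨hy, fun h => by rcases h with rfl | rfl; exact h1D hy; exact h2D hy⟩
      rw [heuler] at hIH
      simp only [h1D, false_and, decide_false, cond_false, Nat.add_zero]
      simpa using hIH

/-- **Counting outwardly matched faces.** Let `(C, D)` be an out-`j` collapsible pair with `D`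
nonempty: `L` is a collapsing sequence of `C` onto a vertex `w` of `D` in which every outwardly
matched face of `D` (a face of `D` matched with a face not in `D`) has dimension exactly `j`.
Then the number of outwardly matched `j`-faces equals `(−1)^j (χ(D) − 1)`; in particular it is
independent of the out-`j` collapsing sequence chosen. -/
theorem outwardly_matched_count {V : Type*} [DecidableEq V]
    (C D : Finset (Finset V)) (hC : IsComplex C) (hD : IsComplex D)
    (hDC : D ⊆ C) (hDne : D.Nonempty) (j : ℕ)
    (L : List (Finset V × Finset V)) (w : V) (hw : ({w} : Finset V) ∈ D)
    (hseq : IsCollapseSeq C L {({w} : Finset V)})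
    (houtj : ∀ p ∈ L, p.1 ∈ D → p.2 ∉ D → p.1.card = j + 1) :
    ((L.countP fun p => decide (p.1 ∈ D ∧ p.2 ∉ D)) : ℤ) = (-1) ^ j * (eulerChar D - 1) := by
  exact aux_count j w L C D hC hD hDC hw hseq houtj
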